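/- Let λ, μ > 0 with ρ = λ/μ < 1, and let i ≥ 1 be an integer. The function t ↦ EL_i(t) defined by the explicit integral formula EL_i(t) = (2/π)·ρ^{(1−i)/2}·∫₀^π e^{−μ t γ(y)}/γ(y)² · a_i(y)·sin(y) dy + ρ/(1−ρ) is differentiable at t = 0 and its derivative at t = 0 equals λ − μ. -/

import Mathlib

open Real MeasureTheory Set Filter

/-- γ(y) = 1 + ρ − 2√ρ·cos(y). -/
noncomputable def gam (ρ y : ℝ) : ℝ := 1 + ρ - 2 * Real.sqrt ρ * Real.cos y

/-- a_k(y) = sin(k·y) − √ρ·sin((k+1)·y). -/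
noncomputable def aco (ρ : ℝ) (k : ℕ) (y : ℝ) : ℝ :=
  Real.sin ((k : ℝ) * y) - Real.sqrt ρ * Real.sin (((k : ℝ) + 1) * y)

/-- Transient expected queue length of an M/M/1 queue started with `i` customers. -/
noncomputable def EL (lam mu : ℝ) (i : ℕ) (t : ℝ) : ℝ :=
  (2 / Real.pi) * (lam / mu) ^ ((1 - (i : ℝ)) / 2) *
    (∫ y in (0 : ℝ)..Real.pi,
      Real.exp (-(mu * t * gam (lam / mu) y)) / (gam (lam / mu) y) ^ 2 *
        (aco (lam / mu) i y * Real.sin y)) +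
  (lam / mu) / (1 - lam / mu)

/-- Transient probability that an M/M/1 queue started with `i` customers has `j` at time `t`. -/
noncomputable def pq (lam mu : ℝ) (i j : ℕ) (t : ℝ) : ℝ :=
  (2 / Real.pi) * (lam / mu) ^ (((j : ℝ) - (i : ℝ)) / 2) *
    (∫ y in (0 : ℝ)..Real.pi,
      Real.exp (-(mu * t * gam (lam / mu) y)) / gam (lam / mu) y *
        (aco (lam / mu) i y * aco (lam / mu) j y)) +
  (1 - lam / mu) * (lam / mu) ^ j

/-- Erlang(n) density with rate `mu`: f_n(t) = μⁿ t^{n−1} e^{−μt}/(n−1)!. -/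
noncomputable def erl (mu : ℝ) (n : ℕ) (t : ℝ) : ℝ :=
  mu ^ n * t ^ (n - 1) * Real.exp (-(mu * t)) / (Nat.factorial (n - 1) : ℝ)

/-- Expected total time to complete queue with `a` customers first, then queue with `b`. -/
noncomputable def ETT (lam mu : ℝ) (a b : ℕ) : ℝ :=
  ((a : ℝ) + 2) / mu + (1 / mu) * ∫ t in Set.Ioi (0 : ℝ), erl mu (a + 1) t * EL lam mu b t

open Real Complex in
theorem hasSum_aux (r y : ℝ) (i : ℕ) (hr : 0 ≤ r) (hr1 : r < 1)
    (hγ : (1 + r^2 - 2*r*Real.cos y : ℝ) ≠ 0) :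
    HasSum (fun k : ℕ => r ^ k * Real.sin (((i:ℝ) - k) * y))
      ((Real.sin (i*y) - r * Real.sin (((i:ℝ)+1)*y)) / (1 + r^2 - 2*r*Real.cos y)) := by
  have hw : ‖(r:ℂ) * Complex.exp (-(y * Complex.I))‖ < 1 := by
    simp [map_mul, Complex.norm_exp, _root_.abs_of_nonneg hr, hr1]
  have h := (hasSum_geometric_of_norm_lt_one hw).mul_left
      (Complex.exp (((i:ℝ) * y) * Complex.I))
  have h2 := h.mapL Complex.imCLM
  convert h2 using 2 with k
  · rw [mul_pow, ← Complex.exp_nat_mul, mul_comm (((r:ℂ))^k), ← mul_assoc, ← Complex.exp_add,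
      show ((i:ℝ) * y : ℂ) * Complex.I + (k:ℕ) * -((y:ℂ) * Complex.I)
          = ((((i:ℝ) - k) * y : ℝ) : ℂ) * Complex.I by push_cast; ring]
    simp only [Complex.imCLM_apply, Complex.mul_im, Complex.exp_ofReal_mul_I_re,
      Complex.exp_ofReal_mul_I_im, Complex.ofReal_pow, Complex.ofReal_re, Complex.ofReal_im,
      ← Complex.ofReal_pow]
    ring
  · simp only [Complex.imCLM_apply, Complex.mul_im, Complex.inv_re, Complex.inv_im,
      Complex.normSq_apply, Complex.sub_re, Complex.sub_im, Complex.one_re, Complex.one_im,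
      Complex.mul_re, Complex.mul_im, Complex.exp_re, Complex.exp_im, Complex.ofReal_re,
      Complex.ofReal_im, Complex.I_re, Complex.I_im, Complex.neg_re, Complex.neg_im]
    simp only [mul_zero, zero_mul, mul_one, one_mul, neg_zero, zero_sub, sub_zero, zero_add,
      add_zero, Real.exp_zero, neg_neg, Real.cos_neg, Real.sin_neg]
    have hD : ((1:ℝ) - r * Real.cos y) * (1 - r * Real.cos y) +
        -(r * -Real.sin y) * -(r * -Real.sin y) = 1 + r^2 - 2*r*Real.cos y := by
      nlinarith [Real.sin_sq_add_cos_sq y]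
    rw [hD, show ((i:ℝ)+1)*y = (i:ℝ)*y + y by ring, Real.sin_add]
    field_simp
    ring

open Real intervalIntegral in
theorem integral_cos_int (m : ℤ) :
    ∫ y in (0:ℝ)..Real.pi, Real.cos ((m:ℝ) * y) = if m = 0 then Real.pi else 0 := by
  rcases eq_or_ne m 0 with hm | hm
  · simp [hm]
  · have hmr : (m:ℝ) ≠ 0 := Int.cast_ne_zero.mpr hm
    rw [if_neg hm]
    have := intervalIntegral.integral_comp_mul_left (a := (0:ℝ)) (b := Real.pi)
      (fun x => Real.cos x) hmr
    rw [this]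
    simp [integral_cos, Real.sin_int_mul_pi]

open Real in
theorem integral_sin_int_mul_sin (m : ℤ) :
    ∫ y in (0:ℝ)..Real.pi, Real.sin ((m:ℝ) * y) * Real.sin y
      = if m = 1 then Real.pi/2 else if m = -1 then -(Real.pi/2) else 0 := by
  have key : ∀ y : ℝ, Real.sin ((m:ℝ)*y) * Real.sin y
      = (Real.cos (((m-1 : ℤ):ℝ)*y) - Real.cos (((m+1 : ℤ):ℝ)*y)) / 2 := by
    intro y
    push_cast
    rw [show ((m:ℝ)-1)*y = (m:ℝ)*y - y by ring, show ((m:ℝ)+1)*y = (m:ℝ)*y + y by ring,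
      Real.cos_sub, Real.cos_add]
    ring
  simp only [key]
  rw [intervalIntegral.integral_div]
  rw [intervalIntegral.integral_sub (by
      apply Continuous.intervalIntegrable; continuity) (by
      apply Continuous.intervalIntegrable; continuity)]
  rw [integral_cos_int, integral_cos_int]
  rcases eq_or_ne m 1 with h1 | h1
  · simp [h1]
  · rcases eq_or_ne m (-1) with h2 | h2
    · norm_num [h2]; linarith
    · rw [if_neg (by omega), if_neg (by omega), if_neg h1, if_neg h2]
      norm_num

open scoped ENNReal NNReal
open Real MeasureTheory in
theorem key_integral (r : ℝ) (hr : 0 ≤ r) (hr1 : r < 1) (i : ℕ) (hi : 1 ≤ i)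
    (hs : ∀ y : ℝ, HasSum (fun k : ℕ => r ^ k * Real.sin (((i:ℝ) - k) * y))
      ((Real.sin (i*y) - r * Real.sin (((i:ℝ)+1)*y)) / (1 + r^2 - 2*r*Real.cos y))) :
    ∫ y in (0:ℝ)..Real.pi,
        (Real.sin ((i:ℝ)*y) - r * Real.sin (((i:ℝ)+1)*y)) / (1 + r^2 - 2*r*Real.cos y) * Real.sin y
      = Real.pi/2 * (r^(i-1) - r^(i+1)) := by
  have hpt : ∀ y : ℝ,
      (Real.sin ((i:ℝ)*y) - r * Real.sin (((i:ℝ)+1)*y)) / (1 + r^2 - 2*r*Real.cos y) * Real.sin y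
      = ∑' k : ℕ, (r ^ k * Real.sin (((i:ℝ) - k) * y) * Real.sin y) := by
    intro y
    exact (((hs y).mul_right (Real.sin y)).tsum_eq).symm
  rw [intervalIntegral.integral_of_le Real.pi_pos.le]
  simp_rw [hpt]
  rw [MeasureTheory.integral_tsum]
  · have hterm : ∀ k : ℕ, (∫ y in Set.Ioc (0:ℝ) Real.pi, r ^ k * Real.sin (((i:ℝ) - k) * y) * Real.sin y)
        = r ^ k * (if ((i:ℤ) - k) = 1 then Real.pi/2 else if ((i:ℤ) - k) = -1 then -(Real.pi/2) else 0) := by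
      intro k
      rw [← intervalIntegral.integral_of_le Real.pi_pos.le]
      rw [show (fun y => r ^ k * Real.sin (((i:ℝ) - k) * y) * Real.sin y)
          = fun y => r ^ k * (Real.sin ((((i:ℤ) - k : ℤ):ℝ) * y) * Real.sin y) by
        funext y; push_cast; ring]
      rw [intervalIntegral.integral_const_mul, integral_sin_int_mul_sin]
    simp_rw [hterm]
    rw [tsum_eq_sum (s := ({i-1, i+1} : Finset ℕ)) (by
      intro k hk
      simp only [Finset.mem_insert, Finset.mem_singleton] at hk
      push_neg at hk
      rw [if_neg (by omega), if_neg (by omega), mul_zero])]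
    rw [Finset.sum_pair (by omega)]
    rw [if_pos (by omega), if_neg (by omega), if_pos (by omega)]
    ring
  · intro k
    apply Continuous.aestronglyMeasurable
    continuity
  · have hb : ∀ k : ℕ, (∫⁻ y in Set.Ioc (0:ℝ) Real.pi, ‖r ^ k * Real.sin (((i:ℝ) - k) * y) * Real.sin y‖₊)
        ≤ ENNReal.ofReal Real.pi * (ENNReal.ofReal r) ^ k := by
      intro k
      have hb1 : ∀ y : ℝ, (‖r ^ k * Real.sin (((i:ℝ) - k) * y) * Real.sin y‖₊ : ℝ≥0∞)
          ≤ ENNReal.ofReal (r ^ k) := by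
        intro y
        rw [← enorm_eq_nnnorm, ← ofReal_norm]
        apply ENNReal.ofReal_le_ofReal
        rw [norm_mul, norm_mul, Real.norm_eq_abs, Real.norm_eq_abs, Real.norm_eq_abs,
          abs_pow, abs_of_nonneg hr]
        calc r^k * |Real.sin (((i:ℝ) - k) * y)| * |Real.sin y|
            ≤ r^k * 1 * 1 := by
              apply mul_le_mul (mul_le_mul le_rfl (Real.abs_sin_le_one _) (abs_nonneg _)
                (by positivity)) (Real.abs_sin_le_one _) (abs_nonneg _) (by positivity)
          _ = r^k := by ring
      calc (∫⁻ y in Set.Ioc (0:ℝ) Real.pi, ‖r ^ k * Real.sin (((i:ℝ) - k) * y) * Real.sin y‖₊)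
          ≤ ∫⁻ _ in Set.Ioc (0:ℝ) Real.pi, ENNReal.ofReal (r ^ k) := lintegral_mono fun y => hb1 y
        _ = ENNReal.ofReal (r ^ k) * volume (Set.Ioc (0:ℝ) Real.pi) := by
            rw [MeasureTheory.lintegral_const, Measure.restrict_apply MeasurableSet.univ,
              Set.univ_inter]
        _ = ENNReal.ofReal Real.pi * (ENNReal.ofReal r) ^ k := by
            rw [Real.volume_Ioc, ENNReal.ofReal_pow hr]
            ring_nf
    apply ne_top_of_le_ne_top _ (ENNReal.tsum_le_tsum hb)
    rw [ENNReal.tsum_mul_left, ENNReal.tsum_geometric]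
    apply ENNReal.mul_ne_top ENNReal.ofReal_ne_top
    rw [ENNReal.inv_ne_top]
    intro hc
    rw [tsub_eq_zero_iff_le] at hc
    have : ENNReal.ofReal r < 1 := by
      rw [← ENNReal.ofReal_one]
      exact ENNReal.ofReal_lt_ofReal_iff_of_nonneg hr |>.mpr hr1
    exact absurd hc (not_le.mpr this)

/-- The derivative of EL_i at t = 0 equals λ − μ, for i ≥ 1. -/
theorem EL_hasDerivAt_zero (lam mu : ℝ) (hlam : 0 < lam) (hmu : 0 < mu)
    (hρ : lam / mu < 1) (i : ℕ) (hi : 1 ≤ i) :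
    HasDerivAt (fun t : ℝ => EL lam mu i t) (lam - mu) 0 := by
  set ρ : ℝ := lam / mu with hρdef
  have hρ0 : 0 < ρ := div_pos hlam hmu
  set r : ℝ := Real.sqrt ρ with hrdef
  have hr0 : 0 ≤ r := Real.sqrt_nonneg ρ
  have hrsq : r ^ 2 = ρ := Real.sq_sqrt hρ0.le
  have hr1 : r < 1 := by
    rw [hrdef, ← Real.sqrt_one]; exact Real.sqrt_lt_sqrt hρ0.le hρ
  have hgam_eq : ∀ y, gam ρ y = 1 + r^2 - 2*r*Real.cos y := by
    intro y; rw [gam, hrsq]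
  have hγlb : ∀ y, (1 - r)^2 ≤ gam ρ y := by
    intro y; rw [hgam_eq]; nlinarith [Real.cos_le_one y]
  have hlbpos : (0:ℝ) < (1 - r)^2 := pow_pos (by linarith) 2
  have hγpos : ∀ y, 0 < gam ρ y := fun y => lt_of_lt_of_le hlbpos (hγlb y)
  have hγub : ∀ y, gam ρ y ≤ 4 := by
    intro y; rw [hgam_eq]; nlinarith [Real.neg_one_le_cos y]
  have hcont_gam : Continuous (gam ρ) := by
    unfold gam; fun_prop
  have hcont_aco : Continuous (fun y => aco ρ i y * Real.sin y) := by
    unfold aco; fun_prop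
  have hacobd : ∀ y, |aco ρ i y * Real.sin y| ≤ 2 := by
    intro y
    rw [abs_mul]
    calc |aco ρ i y| * |Real.sin y| ≤ 2 * 1 := by
          apply mul_le_mul _ (Real.abs_sin_le_one _) (abs_nonneg _) (by norm_num)
          rw [aco]
          calc |Real.sin ((i:ℝ)*y) - r * Real.sin (((i:ℝ)+1)*y)|
              ≤ |Real.sin ((i:ℝ)*y)| + |r * Real.sin (((i:ℝ)+1)*y)| := abs_sub _ _
            _ ≤ 1 + 1 := by
                apply add_le_add (Real.abs_sin_le_one _)
                rw [abs_mul, abs_of_nonneg hr0]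
                calc r * |Real.sin (((i:ℝ)+1)*y)| ≤ 1 * 1 :=
                      mul_le_mul hr1.le (Real.abs_sin_le_one _) (abs_nonneg _) zero_le_one
                  _ = 1 := by ring
            _ = 2 := by norm_num
      _ = 2 := by ring
  -- derivative of the integral
  set F : ℝ → ℝ → ℝ := fun t y =>
    Real.exp (-(mu * t * gam ρ y)) / (gam ρ y) ^ 2 * (aco ρ i y * Real.sin y) with hF
  set F' : ℝ → ℝ → ℝ := fun t y =>
    -(mu * (Real.exp (-(mu * t * gam ρ y)) / gam ρ y * (aco ρ i y * Real.sin y))) with hF'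
  have hderiv := intervalIntegral.hasDerivAt_integral_of_dominated_loc_of_deriv_le
    (F := F) (F' := F') (x₀ := (0:ℝ)) (a := (0:ℝ)) (b := Real.pi) (μ := volume)
    (bound := fun _ => mu * (Real.exp (4*mu) / (1-r)^2 * 2)) (s := Metric.ball (0:ℝ) 1) (Metric.ball_mem_nhds 0 one_pos)
    (Filter.Eventually.of_forall (fun x => by
      apply Continuous.aestronglyMeasurable
      apply Continuous.mul _ hcont_aco
      exact (Real.continuous_exp.comp (by fun_prop)).div (by fun_prop)
        (fun y => pow_ne_zero 2 (hγpos y).ne')))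
    (by
      apply Continuous.intervalIntegrable
      apply Continuous.mul _ hcont_aco
      exact (Real.continuous_exp.comp (by fun_prop)).div (by fun_prop)
        (fun y => pow_ne_zero 2 (hγpos y).ne'))
    (by
      apply Continuous.aestronglyMeasurable
      apply Continuous.neg
      apply Continuous.mul continuous_const
      apply Continuous.mul _ hcont_aco
      exact (Real.continuous_exp.comp (by fun_prop)).div hcont_gam
        (fun y => (hγpos y).ne'))
    (Filter.Eventually.of_forall (fun y _ => by
      intro x hx
      rw [Metric.mem_ball, Real.dist_eq, sub_zero] at hx
      have hx1 : -1 < x := (abs_lt.mp hx).1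
      have hexp : Real.exp (-(mu * x * gam ρ y)) ≤ Real.exp (4*mu) := by
        apply Real.exp_le_exp.mpr
        have e1 : mu * gam ρ y * (-x) ≤ mu * gam ρ y * 1 :=
          mul_le_mul_of_nonneg_left (by linarith) (mul_nonneg hmu.le (hγpos y).le)
        have e2 : mu * gam ρ y ≤ mu * 4 := mul_le_mul_of_nonneg_left (hγub y) hmu.le
        nlinarith
      rw [hF', norm_neg, Real.norm_eq_abs, abs_mul, abs_of_pos hmu, abs_mul, abs_div,
        abs_of_pos (Real.exp_pos _), abs_of_pos (hγpos y)]
      apply mul_le_mul_of_nonneg_left _ hmu.le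
      calc Real.exp (-(mu * x * gam ρ y)) / gam ρ y * |aco ρ i y * Real.sin y|
          ≤ Real.exp (4*mu) / (1-r)^2 * 2 := by
            apply mul_le_mul _ (hacobd y) (abs_nonneg _) (by positivity)
            exact div_le_div₀ (Real.exp_pos _).le hexp hlbpos (hγlb y)
        _ = Real.exp (4*mu) / (1-r)^2 * 2 := rfl))
    (by apply Continuous.intervalIntegrable; continuity)
    (Filter.Eventually.of_forall (fun y _ => by
      intro x hx
      have h0 : HasDerivAt (fun t : ℝ => (-(mu * gam ρ y)) * t) (-(mu * gam ρ y)) x := by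
        simpa using (hasDerivAt_id x).const_mul (-(mu * gam ρ y))
      have h1 : HasDerivAt (fun t : ℝ => -(mu * t * gam ρ y)) (-(mu * gam ρ y)) x := by
        have heq : (fun t : ℝ => -(mu * t * gam ρ y)) = fun t : ℝ => (-(mu * gam ρ y)) * t := by
          funext t; ring
        rw [heq]; exact h0
      have h2 := ((h1.exp.div_const ((gam ρ y)^2)).mul_const (aco ρ i y * Real.sin y))
      convert h2 using 1
      · rfl
      simp only [hF']
      have hne := (hγpos y).ne'
      field_simp))
  obtain ⟨-, hd⟩ := hderiv
  -- compute the derivative integral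
  have hval : (∫ y in (0:ℝ)..Real.pi, F' 0 y)
      = -mu * (Real.pi/2 * (r^(i-1) - r^(i+1))) := by
    have : ∀ y, F' 0 y = -mu * ((Real.sin ((i:ℝ)*y) - r * Real.sin (((i:ℝ)+1)*y))
        / (1 + r^2 - 2*r*Real.cos y) * Real.sin y) := by
      intro y
      simp only [hF']
      rw [show mu * (0:ℝ) * gam ρ y = 0 by ring, neg_zero, Real.exp_zero, ← hgam_eq]
      rw [aco]
      ring
    simp_rw [this]
    rw [intervalIntegral.integral_const_mul, key_integral r hr0 hr1 i hi (fun y =>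
      hasSum_aux r y i hr0 hr1 (by rw [← hgam_eq]; exact (hγpos y).ne'))]
  rw [hval] at hd
  -- assemble
  have hEL : (fun t : ℝ => EL lam mu i t)
      = fun t => (2 / Real.pi) * ρ ^ ((1 - (i:ℝ))/2) * (∫ y in (0:ℝ)..Real.pi, F t y)
          + ρ / (1 - ρ) := by
    funext t; rw [EL]
  rw [hEL]
  have := (hd.const_mul ((2 / Real.pi) * ρ ^ ((1 - (i:ℝ))/2))).add_const (ρ / (1 - ρ))
  convert this using 1
  · rfl
  · rfl
  -- final arithmetic
  have hpowgen : ∀ n : ℕ, r ^ n = ρ ^ ((n:ℝ)/2) := by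
    intro n
    rw [hrdef, Real.sqrt_eq_rpow, ← Real.rpow_natCast (ρ ^ ((1:ℝ)/2)) n,
      ← Real.rpow_mul hρ0.le]
    congr 1
    ring
  have hcast : ((i - 1 : ℕ):ℝ) = (i:ℝ) - 1 := by
    rw [Nat.cast_sub hi]; norm_num
  have h1 : ρ ^ ((1 - (i:ℝ))/2) * r ^ (i-1) = 1 := by
    rw [hpowgen, hcast, ← Real.rpow_add hρ0,
      show (1 - (i:ℝ))/2 + ((i:ℝ) - 1)/2 = 0 by ring, Real.rpow_zero]
  have h2 : ρ ^ ((1 - (i:ℝ))/2) * r ^ (i+1) = ρ := by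
    rw [hpowgen, ← Real.rpow_add hρ0]
    push_cast
    rw [show (1 - (i:ℝ))/2 + ((i:ℝ)+1)/2 = 1 by ring, Real.rpow_one]
  have hπ : Real.pi ≠ 0 := Real.pi_ne_zero
  have hmulρ : mu * ρ = lam := by
    rw [hρdef]; field_simp
  calc lam - mu = -mu * (1 - ρ) := by rw [neg_mul, mul_sub, mul_one, hmulρ]; ring
    _ = (2 / Real.pi) * ρ ^ ((1 - (i:ℝ))/2) * (-mu * (Real.pi/2 * (r^(i-1) - r^(i+1)))) := by
        have expand : (2 / Real.pi) * ρ ^ ((1 - (i:ℝ))/2) * (-mu * (Real.pi/2 * (r^(i-1) - r^(i+1))))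
            = -mu * (ρ ^ ((1 - (i:ℝ))/2) * r^(i-1) - ρ ^ ((1 - (i:ℝ))/2) * r^(i+1))
              * ((2/Real.pi) * (Real.pi/2)) := by ring
        rw [expand, h1, h2]
        field_simp
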